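/- arXiv:1803.04327 — 4 statements merged into one kernel-verified Lean document; each statement's English description precedes it below -/
import Mathlib

section
/- Let G be a proper interval graph with intervals I_1 < ... < I_n ordered by left endpoints, let U ⊆ V(G), and let C, C' be two components of G[U] such that every interval of C is to the left of every interval of C'. If I is an interval with max(C) < I < min(C') (in the left-endpoint order) whose vertex has at least k neighbors in U in G, and every interval of U is associated with C or C' or lies entirely left of C or entirely right of C', then I intersects at least k intervals from C ∪ C'. -/
/-- The intersection graph of a proper interval model. -/
def interGraph (n : ℕ) (a b : Fin n → ℝ) : SimpleGraph (Fin n) where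
  Adj i j := i ≠ j ∧ (Set.Icc (a i) (b i) ∩ Set.Icc (a j) (b j)).Nonempty
  symm := ⟨fun i j h => ⟨h.1.symm, Set.inter_comm _ _ ▸ h.2⟩⟩
  loopless := ⟨fun i h => h.1 rfl⟩

/-- Right endpoints are monotone in a proper model. -/
lemma bmono_aux (n : ℕ) (a b : Fin n → ℝ) (hab : ∀ i, a i ≤ b i)
    (hmono : StrictMono a)
    (hproper : ∀ i j : Fin n, i ≠ j →
      ¬(Set.Icc (a i) (b i) ⊆ Set.Icc (a j) (b j)))
    {i j : Fin n} (hij : i < j) : b i ≤ b j := by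
  by_contra h
  push_neg at h
  exact hproper j i hij.ne' (fun x hx =>
    ⟨le_trans (hmono hij).le hx.1, le_trans hx.2 h.le⟩)

/-- Membership in a component set via adjacency. -/
lemma mem_comp_of_adj (n : ℕ) (a b : Fin n → ℝ) (U : Set (Fin n))
    (cc : ((interGraph n a b).induce U).ConnectedComponent)
    {x y : Fin n} (hxU : x ∈ U) (hx : x ∈ Subtype.val '' cc.supp) (hyU : y ∈ U)
    (hadj : (interGraph n a b).Adj x y) : y ∈ Subtype.val '' cc.supp := by
  obtain ⟨⟨x', hx'U⟩, hx'supp, hx'eq⟩ := hx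
  subst hx'eq
  have hadj' : ((interGraph n a b).induce U).Adj ⟨x', hx'U⟩ ⟨y, hyU⟩ := hadj
  refine ⟨⟨y, hyU⟩, ?_, rfl⟩
  rw [SimpleGraph.ConnectedComponent.mem_supp_iff] at hx'supp ⊢
  rw [← hx'supp]
  exact SimpleGraph.ConnectedComponent.sound hadj'.symm.reachable

/-- An interval strictly between two consecutive components C, C' of G[U], whose
vertex has at least k neighbors in U, intersects at least k intervals of C ∪ C'. -/
theorem stmt_10 (n k : ℕ) (hk : 0 < k) (a b : Fin n → ℝ) (hab : ∀ i, a i ≤ b i)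
    (hmono : StrictMono a)
    (hproper : ∀ i j : Fin n, i ≠ j →
      ¬(Set.Icc (a i) (b i) ⊆ Set.Icc (a j) (b j)))
    (U : Set (Fin n)) (C C' : Set (Fin n))
    (hC : ∃ cc : ((interGraph n a b).induce U).ConnectedComponent,
      C = Subtype.val '' cc.supp)
    (hC' : ∃ cc : ((interGraph n a b).induce U).ConnectedComponent,
      C' = Subtype.val '' cc.supp)
    (hCC' : ∀ c ∈ C, ∀ c' ∈ C', c < c')
    (mC : Fin n) (hmC : mC ∈ C) (hmCmax : ∀ c ∈ C, c ≤ mC)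
    (m' : Fin n) (hm' : m' ∈ C') (hm'min : ∀ c' ∈ C', m' ≤ c')
    (i : Fin n) (hi1 : mC < i) (hi2 : i < m')
    (hnb : k ≤ {j | j ∈ U ∧ (interGraph n a b).Adj i j}.ncard)
    (hside : ∀ j ∈ U, j ∈ C ∨ j ∈ C' ∨ (∀ c ∈ C, j < c) ∨ (∀ c' ∈ C', c' < j)) :
    k ≤ {j | j ∈ C ∪ C' ∧
      (Set.Icc (a i) (b i) ∩ Set.Icc (a j) (b j)).Nonempty}.ncard := by
  obtain ⟨cc, hCe⟩ := hC
  obtain ⟨cc', hC'e⟩ := hC'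
  have hCU : ∀ x ∈ C, x ∈ U := by
    intro x hx; rw [hCe] at hx; obtain ⟨y, _, rfl⟩ := hx; exact y.2
  have hC'U : ∀ x ∈ C', x ∈ U := by
    intro x hx; rw [hC'e] at hx; obtain ⟨y, _, rfl⟩ := hx; exact y.2
  refine le_trans hnb (Set.ncard_le_ncard ?_ (Set.toFinite _))
  rintro j ⟨hjU, hne, hint⟩
  refine ⟨?_, hint⟩
  rcases hside j hjU with hj | hj | hj | hj
  · exact Or.inl hj
  · exact Or.inr hj
  · -- j is left of all of C : contradiction
    exfalso
    have hjmC : j < mC := hj mC hmC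
    obtain ⟨x, hx1, hx2⟩ := hint
    have h1 : a i ≤ b j := le_trans hx1.1 hx2.2
    have hadj : (interGraph n a b).Adj j mC := by
      refine ⟨hjmC.ne, ⟨a mC, ⟨(hmono hjmC).le, le_trans (hmono hi1).le h1⟩,
        ⟨le_rfl, hab mC⟩⟩⟩
    have : j ∈ C := by
      rw [hCe]
      exact mem_comp_of_adj n a b U cc (hCU mC hmC) (hCe ▸ hmC) hjU hadj.symm
    exact lt_irrefl j (hj j this)
  · -- j is right of all of C' : contradiction
    exfalso
    have hm'j : m' < j := hj m' hm'
    obtain ⟨x, hx1, hx2⟩ := hint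
    have hij : i < j := lt_trans hi2 hm'j
    have h1 : a j ≤ b i := le_trans hx2.1 hx1.2
    have h2 : b i ≤ b m' := bmono_aux n a b hab hmono hproper hi2
    have hadj : (interGraph n a b).Adj m' j := by
      refine ⟨hm'j.ne, ⟨a j, ⟨(hmono hm'j).le, le_trans h1 h2⟩, ⟨le_rfl, hab j⟩⟩⟩
    have : j ∈ C' := by
      rw [hC'e]
      exact mem_comp_of_adj n a b U cc' (hC'U m' hm') (hC'e ▸ hm') hjU hadj
    exact lt_irrefl j (hj j this)
end

section
/- Let G be a proper interval graph with proper interval model I_1 < ... < I_n (ordered by left endpoints), let U be a total k-dominating set of G, and let C be a component of G[U] whose vertices correspond to intervals I_{j_1} < ... < I_{j_p}. If u ∈ V(G) has its interval I satisfying I_{j_1} ≤ I ≤ I_{j_p}, then all neighbors of u that belong to U belong to C. -/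
/-- If the interval of u lies between the leftmost and rightmost interval of a
component C of G[U] (U a total k-dominating set), then all neighbors of u
belonging to U belong to C. -/
theorem stmt_11 (n k : ℕ) (hk : 0 < k) (a b : Fin n → ℝ) (hab : ∀ i, a i ≤ b i)
    (hmono : StrictMono a)
    (hproper : ∀ i j : Fin n, i ≠ j →
      ¬(Set.Icc (a i) (b i) ⊆ Set.Icc (a j) (b j)))
    (U : Set (Fin n))
    (htd : ∀ v : Fin n, k ≤ {w | w ∈ U ∧ (interGraph n a b).Adj v w}.ncard)
    (C : Set (Fin n))
    (hC : ∃ cc : ((interGraph n a b).induce U).ConnectedComponent,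
      C = Subtype.val '' cc.supp)
    (j1 jp : Fin n) (hj1 : j1 ∈ C) (hj1min : ∀ c ∈ C, j1 ≤ c)
    (hjp : jp ∈ C) (hjpmax : ∀ c ∈ C, c ≤ jp)
    (u : Fin n) (hu1 : j1 ≤ u) (hu2 : u ≤ jp) :
    ∀ w ∈ U, (interGraph n a b).Adj u w → w ∈ C := by
  classical
  set G := interGraph n a b with hG
  have hbmono : StrictMono b := by
    intro i j hij
    by_contra h
    push_neg at h
    exact hproper j i (fun e => hij.ne e.symm)
      (Set.Icc_subset_Icc (hmono hij).le h)
  have hadj : ∀ i j : Fin n, i < j → (G.Adj i j ↔ a j ≤ b i) := by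
    intro i j hij
    constructor
    · rintro ⟨-, x, hx1, hx2⟩
      exact le_trans hx2.1 hx1.2
    · intro h
      exact ⟨hij.ne, ⟨a j, ⟨(hmono hij).le, h⟩, ⟨le_refl _, hab j⟩⟩⟩
  have humb1 : ∀ i v j : Fin n, i < v → v < j → G.Adj i j → G.Adj i v := by
    intro i v j hiv hvj h
    rw [hadj i j (hiv.trans hvj)] at h
    rw [hadj i v hiv]
    exact le_trans (hmono hvj).le h
  have humb2 : ∀ i v j : Fin n, i < v → v < j → G.Adj i j → G.Adj v j := by
    intro i v j hiv hvj h
    rw [hadj i j (hiv.trans hvj)] at h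
    rw [hadj v j hvj]
    exact h.trans (hbmono hiv).le
  obtain ⟨cc, rfl⟩ := hC
  let G' := G.induce U
  have hadj' : ∀ (x y : U), G.Adj ↑x ↑y → G'.Adj x y := fun x y h => h
  have attach : ∀ c ∈ Subtype.val '' cc.supp, ∀ w, w ∈ U → G.Adj w c →
      w ∈ Subtype.val '' cc.supp := by
    intro c hc w hw hwc
    obtain ⟨x, hx, rfl⟩ := hc
    rw [SimpleGraph.ConnectedComponent.mem_supp_iff] at hx
    refine ⟨⟨w, hw⟩, ?_, rfl⟩
    rw [SimpleGraph.ConnectedComponent.mem_supp_iff, ← hx]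
    exact SimpleGraph.ConnectedComponent.sound (hadj' _ _ hwc).reachable
  have key : ∀ (x y : U) (_ : G'.Walk x y) (v : Fin n) (hv : v ∈ U),
      (x : Fin n) ≤ v → v ≤ (y : Fin n) →
      G'.connectedComponentMk ⟨v, hv⟩ = G'.connectedComponentMk x := by
    intro x y W
    induction W with
    | nil =>
      intro v hv h1 h2
      have : (⟨v, hv⟩ : U) = _ := Subtype.ext (le_antisymm h2 h1)
      rw [this]
    | @cons p q r hpq W ih =>
      intro v hv h1 h2
      rcases le_or_gt (↑q : Fin n) v with h | h
      · rw [ih v hv h h2]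
        exact (SimpleGraph.ConnectedComponent.sound hpq.reachable).symm
      · rcases eq_or_lt_of_le h1 with he | hlt
        · have : (⟨v, hv⟩ : U) = p := Subtype.ext he.symm
          rw [this]
        · have hpv : G.Adj ↑p v := humb1 ↑p v ↑q hlt h hpq
          exact SimpleGraph.ConnectedComponent.sound
            ((hadj' p ⟨v, hv⟩ hpv).reachable).symm
  have between : ∀ v, v ∈ U → j1 ≤ v → v ≤ jp → v ∈ Subtype.val '' cc.supp := by
    intro v hv h1 h2
    obtain ⟨x, hx, rfl⟩ := hj1
    obtain ⟨y, hy, rfl⟩ := hjp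
    rw [SimpleGraph.ConnectedComponent.mem_supp_iff] at hx hy
    have hreach : G'.Reachable x y := by
      rw [← SimpleGraph.ConnectedComponent.eq, hx, hy]
    obtain ⟨W⟩ := hreach
    refine ⟨⟨v, hv⟩, ?_, rfl⟩
    rw [SimpleGraph.ConnectedComponent.mem_supp_iff, key x y W v hv h1 h2, hx]
  intro w hw huw
  rcases lt_trichotomy w j1 with hlt | heq | hgt
  · refine attach j1 hj1 w hw ?_
    rcases eq_or_lt_of_le hu1 with he | hl
    · exact he ▸ huw.symm
    · exact humb1 w j1 u hlt hl huw.symm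
  · exact heq ▸ hj1
  · rcases le_or_gt w jp with hle | hgt2
    · exact between w hw hgt.le hle
    · refine attach jp hjp w hw ?_
      rcases eq_or_lt_of_le hu2 with he | hl
      · exact (he ▸ huw).symm
      · exact (humb2 u jp w hl hgt2 huw).symm
end

section
/- Let G be a proper interval graph with intervals ordered by left endpoints, let U be a total k-dominating set, let C be a component of G[U] with intervals I_{j_1} < ... < I_{j_p} where p ≥ 2k, and let q ∈ {1, ..., p-2k+1}. Then every interval I of G with I_{j_{q+k-1}} ≤ I ≤ I_{j_{q+k}} intersects at least k intervals from the set {I_{j_q}, I_{j_{q+1}}, ..., I_{j_{q+2k-1}}} \ {I}. -/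
open Set

lemma icc_inter_nonempty {au bu av bv : ℝ} (h1 : au ≤ bu) (h2 : av ≤ bv) :
    (Set.Icc au bu ∩ Set.Icc av bv).Nonempty ↔ au ≤ bv ∧ av ≤ bu := by
  rw [Set.Icc_inter_Icc, Set.nonempty_Icc]
  constructor
  · intro h
    exact ⟨le_trans (le_sup_left.trans h) inf_le_right,
      le_trans (le_sup_right.trans h) inf_le_left⟩
  · intro ⟨x, y⟩
    simp only [sup_le_iff, le_inf_iff]
    exact ⟨⟨h1, y⟩, ⟨x, h2⟩⟩

lemma walk_preserve {V : Type*} {G : SimpleGraph V} (P : V → Prop)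
    (hP : ∀ x y, G.Adj x y → P x → P y) {u v : V} (h : G.Reachable u v) (hu : P u) : P v := by
  obtain ⟨w⟩ := h
  induction w with
  | nil => exact hu
  | cons h w ih => exact ih (hP _ _ h hu)

lemma consec {n p : ℕ} (a b : Fin n → ℝ) (hab : ∀ i, a i ≤ b i)
    (hmono : StrictMono a) (hbmono : StrictMono b)
    (U : Set (Fin n)) (j : Fin p → Fin n) (hjmono : StrictMono j)
    (cc : ((interGraph n a b).induce U).ConnectedComponent)
    (hC : Set.range j = Subtype.val '' cc.supp)
    (m : ℕ) (h1 : m + 1 < p) : a (j ⟨m+1, h1⟩) ≤ b (j ⟨m, by omega⟩) := by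
  by_contra hcon
  push_neg at hcon
  have hm : j ⟨m, by omega⟩ ∈ Set.range j := ⟨_, rfl⟩
  rw [hC] at hm
  obtain ⟨x0, hx0supp, hx0⟩ := hm
  have hm1 : j ⟨m+1, h1⟩ ∈ Set.range j := ⟨_, rfl⟩
  rw [hC] at hm1
  obtain ⟨x1, hx1supp, hx1⟩ := hm1
  have hreach : ((interGraph n a b).induce U).Reachable x0 x1 := by
    rw [SimpleGraph.ConnectedComponent.mem_supp_iff] at hx0supp hx1supp
    exact SimpleGraph.ConnectedComponent.exact (hx0supp.trans hx1supp.symm)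
  have key := walk_preserve (G := (interGraph n a b).induce U)
    (fun x => x ∈ cc.supp ∧ (x : Fin n) ≤ j ⟨m, by omega⟩) ?_ hreach ⟨hx0supp, le_of_eq hx0⟩
  · have h2 := key.2
    rw [hx1] at h2
    exact absurd h2 (not_le.mpr (hjmono (by simp [Fin.lt_def])))
  · rintro x y hadj ⟨hxsupp, hxle⟩
    have hysupp : y ∈ cc.supp := by
      rw [SimpleGraph.ConnectedComponent.mem_supp_iff] at hxsupp ⊢
      rw [← hxsupp]
      exact (SimpleGraph.ConnectedComponent.connectedComponentMk_eq_of_adj hadj).symm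
    refine ⟨hysupp, ?_⟩
    have hyr : (y : Fin n) ∈ Set.range j := by rw [hC]; exact ⟨y, hysupp, rfl⟩
    obtain ⟨m2, hm2⟩ := hyr
    by_contra hyle
    push_neg at hyle
    have hm2gt : ((⟨m, by omega⟩ : Fin p) : ℕ) < (m2 : ℕ) := by
      have h3 : (⟨m, by omega⟩ : Fin p) < m2 := by
        rw [← hjmono.lt_iff_lt, hm2]; exact hyle
      exact h3
    have hle1 : j ⟨m+1, h1⟩ ≤ (y : Fin n) := by
      rw [← hm2]
      exact hjmono.monotone (by rw [Fin.le_def]; simpa using hm2gt)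
    have hadj' : (interGraph n a b).Adj x y := hadj
    obtain ⟨hne, hnon⟩ := hadj'
    rw [icc_inter_nonempty (hab _) (hab _)] at hnon
    have h5 : a (y : Fin n) ≤ b (j ⟨m, by omega⟩) := le_trans hnon.2 (hbmono.monotone hxle)
    have h6 : a (j ⟨m+1, h1⟩) ≤ a (y : Fin n) := hmono.monotone hle1
    linarith

lemma window_mem {n p : ℕ} (a b : Fin n → ℝ) (hab : ∀ i, a i ≤ b i)
    (hmono : StrictMono a) (hbmono : StrictMono b)
    (U : Set (Fin n)) (j : Fin p → Fin n) (hjmono : StrictMono j)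
    (cc : ((interGraph n a b).induce U).ConnectedComponent)
    (hC : Set.range j = Subtype.val '' cc.supp)
    (w : Fin n) (hwU : w ∈ U) (q1 q2 : Fin p)
    (hge : j q1 ≤ w) (hle : w ≤ j q2) :
    ∃ m : Fin p, j m = w ∧ q1 ≤ m ∧ m ≤ q2 := by
  classical
  set M : Finset (Fin p) := Finset.univ.filter (fun m => j m ≤ w) with hM
  have hMne : M.Nonempty := ⟨q1, by simp [hM, hge]⟩
  set m0 := M.max' hMne with hm0def
  have hm0M : m0 ∈ M := M.max'_mem hMne
  have hm0 : j m0 ≤ w := by simpa [hM] using hm0M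
  by_cases heq : j m0 = w
  · exact ⟨m0, heq, by rw [← hjmono.le_iff_le, heq]; exact hge,
      by rw [← hjmono.le_iff_le, heq]; exact hle⟩
  exfalso
  have hlt : j m0 < w := lt_of_le_of_ne hm0 heq
  have hm0q2 : m0 < q2 := by rw [← hjmono.lt_iff_lt]; exact lt_of_lt_of_le hlt hle
  have h1 : (m0 : ℕ) + 1 < p := by
    have := hm0q2
    have h2 := q2.isLt
    omega
  set m1 : Fin p := ⟨(m0 : ℕ) + 1, h1⟩ with hm1def
  have hm1notM : m1 ∉ M := by
    intro hmem
    have := M.le_max' m1 hmem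
    rw [← hm0def] at this
    have h3 : (m1 : ℕ) ≤ (m0 : ℕ) := this
    simp [hm1def] at h3
  have hwlt : w < j m1 := by
    by_contra hc
    push_neg at hc
    exact hm1notM (by simp [hM, hc])
  -- j m0 ∈ U via the component
  have hr : j m0 ∈ Set.range j := ⟨_, rfl⟩
  rw [hC] at hr
  obtain ⟨x0, hx0supp, hx0⟩ := hr
  -- adjacency between x0 and ⟨w, hwU⟩
  have hconsec := consec a b hab hmono hbmono U j hjmono cc hC (m0 : ℕ) h1
  have hjm0 : j ⟨(m0 : ℕ), by omega⟩ = j m0 := by congr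
  rw [hjm0] at hconsec
  have hintc : (Set.Icc (a (j m0)) (b (j m0)) ∩ Set.Icc (a w) (b w)).Nonempty := by
    rw [icc_inter_nonempty (hab _) (hab _)]
    constructor
    · exact le_trans (hmono.monotone hm0) (hab w)
    · exact le_trans (hmono hwlt).le hconsec
  have hadjval : (interGraph n a b).Adj (x0 : Fin n) w := by
    rw [hx0]; exact ⟨heq, hintc⟩
  have hadj : ((interGraph n a b).induce U).Adj x0 ⟨w, hwU⟩ := hadjval
  have hwsupp : (⟨w, hwU⟩ : U) ∈ cc.supp := by
    rw [SimpleGraph.ConnectedComponent.mem_supp_iff] at hx0supp ⊢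
    rw [← hx0supp]
    exact (SimpleGraph.ConnectedComponent.connectedComponentMk_eq_of_adj hadj).symm
  have hwr : w ∈ Set.range j := by
    rw [hC]; exact ⟨⟨w, hwU⟩, hwsupp, rfl⟩
  obtain ⟨m2, hm2⟩ := hwr
  have hm2M : m2 ∈ M := by simp [hM, hm2]
  have hm2le : m2 ≤ m0 := M.le_max' m2 hm2M
  have : j m2 ≤ j m0 := hjmono.monotone hm2le
  rw [hm2] at this
  exact absurd this (not_le.mpr hlt)

lemma ncard_ge_of_Icc {p : ℕ} (T : Set (Fin p)) (lo k : ℕ) (hhi : lo + k < p)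
    (bad : Fin p)
    (hsub : ∀ m : Fin p, lo ≤ (m : ℕ) → (m : ℕ) ≤ lo + k → m ≠ bad → m ∈ T) :
    k ≤ T.ncard := by
  have hp0 : 0 < p := by omega
  set e : ℕ → Fin p := fun m => ⟨m % p, Nat.mod_lt _ hp0⟩ with he
  have hinj : Set.InjOn e (Set.Icc lo (lo + k)) := by
    intro x hx y hy hxy
    simp only [he, Fin.mk.injEq] at hxy
    simp only [Set.mem_Icc] at hx hy
    have hx' : x % p = x := Nat.mod_eq_of_lt (by omega)
    have hy' : y % p = y := Nat.mod_eq_of_lt (by omega)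
    omega
  have himg : (e '' Set.Icc lo (lo + k)).ncard = k + 1 := by
    rw [Set.ncard_image_of_injOn hinj, ← Finset.coe_Icc, Set.ncard_coe_finset, Nat.card_Icc]
    omega
  have hsub2 : e '' Set.Icc lo (lo + k) \ {bad} ⊆ T := by
    rintro x ⟨⟨m, hm, rfl⟩, hxbad⟩
    simp only [Set.mem_Icc] at hm
    have hval : ((e m : Fin p) : ℕ) = m := by
      simp only [he]
      exact Nat.mod_eq_of_lt (by omega)
    exact hsub _ (by rw [hval]; omega) (by rw [hval]; omega)
      (by simpa using hxbad)
  have hcard : k ≤ (e '' Set.Icc lo (lo + k) \ {bad}).ncard := by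
    have hu : e '' Set.Icc lo (lo + k) ⊆ (e '' Set.Icc lo (lo + k) \ {bad}) ∪ {bad} := by
      intro x hx
      by_cases hxb : x = bad
      · exact Or.inr (by simp [hxb])
      · exact Or.inl ⟨hx, hxb⟩
    have h2 := Set.ncard_le_ncard hu (Set.toFinite _)
    have h3 := Set.ncard_union_le (e '' Set.Icc lo (lo + k) \ {bad}) {bad}
    rw [Set.ncard_singleton] at h3
    omega
  exact hcard.trans (Set.ncard_le_ncard hsub2 (Set.toFinite T))

/-- For a component of G[U] (U a total k-dominating set) with intervals
I_{j 0} < ... < I_{j (p-1)}, p ≥ 2k, and a window of 2k consecutive intervals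
starting at position q, every interval between the two middle intervals of the
window intersects at least k intervals of the window other than itself. -/
theorem stmt_12 (n k p : ℕ) (hk : 0 < k) (a b : Fin n → ℝ) (hab : ∀ i, a i ≤ b i)
    (hmono : StrictMono a)
    (hproper : ∀ i j : Fin n, i ≠ j →
      ¬(Set.Icc (a i) (b i) ⊆ Set.Icc (a j) (b j)))
    (U : Set (Fin n))
    (htd : ∀ v : Fin n, k ≤ {w | w ∈ U ∧ (interGraph n a b).Adj v w}.ncard)
    (j : Fin p → Fin n) (hjmono : StrictMono j)
    (hC : ∃ cc : ((interGraph n a b).induce U).ConnectedComponent,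
      Set.range j = Subtype.val '' cc.supp)
    (hp : 2 * k ≤ p) (q : ℕ) (hq : q + 2 * k ≤ p) :
    ∀ i : Fin n, j ⟨q + k - 1, by omega⟩ ≤ i → i ≤ j ⟨q + k, by omega⟩ →
      k ≤ {m : Fin p | q ≤ (m : ℕ) ∧ (m : ℕ) < q + 2 * k ∧ j m ≠ i ∧
        (Set.Icc (a i) (b i) ∩ Set.Icc (a (j m)) (b (j m))).Nonempty}.ncard := by
  classical
  obtain ⟨cc, hC⟩ := hC
  have hbmono : StrictMono b := by
    intro u v huv
    by_contra h
    push_neg at h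
    exact hproper v u (ne_of_gt huv) (Set.Icc_subset_Icc (le_of_lt (hmono huv)) h)
  intro i hi1 hi2
  have hp0 : 0 < p := by omega
  have hpk1 : q + k - 1 < p := by omega
  have hpk : q + k < p := by omega
  have hpq : q < p := by omega
  have hp2k : q + 2 * k - 1 < p := by omega
  set T := {m : Fin p | q ≤ (m : ℕ) ∧ (m : ℕ) < q + 2 * k ∧ j m ≠ i ∧
        (Set.Icc (a i) (b i) ∩ Set.Icc (a (j m)) (b (j m))).Nonempty} with hT
  -- consecutive middle adjacency
  have hkey1 : a (j ⟨q + k, hpk⟩) ≤ b (j ⟨q + k - 1, hpk1⟩) := by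
    have h := consec a b hab hmono hbmono U j hjmono cc hC (q + k - 1) (by omega)
    have e1 : (⟨q + k - 1 + 1, by omega⟩ : Fin p) = ⟨q + k, hpk⟩ := by
      simp only [Fin.mk.injEq]; omega
    rwa [e1] at h
  have hkey2 : a (j ⟨q + k, hpk⟩) ≤ b i := hkey1.trans (hbmono.monotone hi1)
  have hkey3 : a i ≤ b (j ⟨q + k - 1, hpk1⟩) := le_trans (hmono.monotone hi2) hkey1
  set N := {w | w ∈ U ∧ (interGraph n a b).Adj i w} with hNdef
  have hadj_of : ∀ w ∈ N, a i ≤ b w ∧ a w ≤ b i := by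
    intro w hw
    exact (icc_inter_nonempty (hab _) (hab _)).mp hw.2.2
  -- the possibly-excluded index
  set bad : Fin p := if h : ∃ m0 : Fin p, j m0 = i then h.choose else ⟨0, hp0⟩ with hbaddef
  have hbad : ∀ m : Fin p, m ≠ bad → j m ≠ i := by
    intro m hm hji
    have hex : ∃ m0 : Fin p, j m0 = i := ⟨m, hji⟩
    apply hm
    rw [hbaddef, dif_pos hex]
    exact hjmono.injective (hji.trans hex.choose_spec.symm)
  by_cases hA : ∃ w ∈ N, w < j ⟨q, hpq⟩
  · obtain ⟨w, hwN, hwlt⟩ := hA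
    have hib : a i ≤ b w := (hadj_of w hwN).1
    apply ncard_ge_of_Icc T q k hpk bad
    intro m hm1 hm2 hmbad
    refine ⟨hm1, by omega, hbad m hmbad, ?_⟩
    rw [icc_inter_nonempty (hab _) (hab _)]
    by_cases hcase : (m : ℕ) ≤ q + k - 1
    · have hmle : j m ≤ j ⟨q + k - 1, hpk1⟩ := hjmono.monotone (by
        rw [Fin.le_def]; exact hcase)
      constructor
      · have : b w ≤ b (j m) :=
          (hbmono (lt_of_lt_of_le hwlt (hjmono.monotone (by rw [Fin.le_def]; exact hm1)))).le
        exact hib.trans this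
      · exact le_trans (hmono.monotone (hmle.trans hi1)) (hab i)
    · have hmeq : m = ⟨q + k, hpk⟩ := by
        apply Fin.ext; show (m : ℕ) = q + k; omega
      rw [hmeq]
      exact ⟨le_trans (hmono.monotone hi2) (hab _), hkey2⟩
  · by_cases hB : ∃ w ∈ N, j ⟨q + 2 * k - 1, hp2k⟩ < w
    · obtain ⟨w, hwN, hwgt⟩ := hB
      have hwb : a w ≤ b i := (hadj_of w hwN).2
      apply ncard_ge_of_Icc T (q + k - 1) k (by omega) bad
      intro m hm1 hm2 hmbad
      refine ⟨by omega, by omega, hbad m hmbad, ?_⟩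
      rw [icc_inter_nonempty (hab _) (hab _)]
      by_cases hcase : q + k ≤ (m : ℕ)
      · have hmge : j ⟨q + k, hpk⟩ ≤ j m := hjmono.monotone (by rw [Fin.le_def]; exact hcase)
        constructor
        · exact le_trans (hmono.monotone (hi2.trans hmge)) (hab _)
        · have h1 : j m ≤ j ⟨q + 2 * k - 1, hp2k⟩ := hjmono.monotone (by
            rw [Fin.le_def]; show (m : ℕ) ≤ q + 2 * k - 1; omega)
          have h2 : a (j m) ≤ a w := (hmono (lt_of_le_of_lt h1 hwgt)).le
          exact h2.trans hwb
      · have hmeq : m = ⟨q + k - 1, hpk1⟩ := by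
          apply Fin.ext; show (m : ℕ) = q + k - 1; omega
        rw [hmeq]
        exact ⟨hkey3, le_trans (hmono.monotone hi1) (hab i)⟩
    · -- all neighbors within the window
      push_neg at hA hB
      have hwin : ∀ w ∈ N, ∃ m : Fin p, j m = w ∧ (⟨q, hpq⟩ : Fin p) ≤ m ∧
          m ≤ ⟨q + 2 * k - 1, hp2k⟩ := by
        intro w hw
        exact window_mem a b hab hmono hbmono U j hjmono cc hC w hw.1
          ⟨q, hpq⟩ ⟨q + 2 * k - 1, hp2k⟩ (hA w hw) (hB w hw)
      set g : Fin n → Fin p := fun w =>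
        if h : ∃ m : Fin p, j m = w ∧ (⟨q, hpq⟩ : Fin p) ≤ m ∧ m ≤ ⟨q + 2 * k - 1, hp2k⟩
        then h.choose else ⟨0, hp0⟩ with hgdef
      have hg : ∀ w ∈ N, j (g w) = w ∧ q ≤ ((g w) : ℕ) ∧ ((g w) : ℕ) ≤ q + 2 * k - 1 := by
        intro w hw
        have hex := hwin w hw
        rw [hgdef]
        simp only [dif_pos hex]
        exact ⟨hex.choose_spec.1, hex.choose_spec.2.1, hex.choose_spec.2.2⟩
      have hinj : Set.InjOn g N := by
        intro x hx y hy hxy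
        have h1 := (hg x hx).1
        have h2 := (hg y hy).1
        rw [← h1, ← h2, hxy]
      have hsub : g '' N ⊆ T := by
        rintro x ⟨w, hw, rfl⟩
        obtain ⟨hjw, hlo, hhi⟩ := hg w hw
        refine ⟨hlo, by omega, ?_, ?_⟩
        · rw [hjw]; exact fun h => hw.2.1 h.symm
        · rw [hjw]; exact hw.2.2
      calc k ≤ N.ncard := htd i
        _ = (g '' N).ncard := (Set.ncard_image_of_injOn hinj).symm
        _ ≤ T.ncard := Set.ncard_le_ncard hsub (Set.toFinite T)
end

section
/- Let G be a proper interval graph with intervals ordered by left endpoints and let U be a k-dominating set of G. Let u ∉ U be a vertex with interval I, and suppose all intervals of U are strictly to the right of I in the left-endpoint order, with I disjoint from the leftmost interval of U. Then there is no such vertex u; i.e., every vertex whose interval lies strictly to the left of, and disjoint from, all intervals of U leads to a contradiction. Equivalently: if u ∉ U and I^+ denotes the leftmost interval of U to the right of I, then I intersects the k leftmost intervals of U that are ≥ I^+, provided every interval of U is ≥ I^+. -/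
/-- If U is a k-dominating set and u ∉ U is a vertex whose interval lies strictly
to the left of all intervals of U and is disjoint from the leftmost interval of
U, we get a contradiction. -/
theorem stmt_15 (n k : ℕ) (hk : 0 < k) (a b : Fin n → ℝ) (hab : ∀ i, a i ≤ b i)
    (hmono : StrictMono a)
    (hproper : ∀ i j : Fin n, i ≠ j →
      ¬(Set.Icc (a i) (b i) ⊆ Set.Icc (a j) (b j)))
    (U : Set (Fin n))
    (hdom : ∀ v : Fin n, v ∉ U →
      k ≤ {w | w ∈ U ∧ (interGraph n a b).Adj v w}.ncard)
    (u : Fin n) (hu : u ∉ U) (hright : ∀ w ∈ U, u < w)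
    (w0 : Fin n) (hw0 : w0 ∈ U) (hw0min : ∀ w ∈ U, w0 ≤ w)
    (hdisj : Set.Icc (a u) (b u) ∩ Set.Icc (a w0) (b w0) = ∅) :
    False := by
  -- b u < a w0, else a w0 would be in both intervals
  have hbu : b u < a w0 := by
    by_contra h
    push_neg at h
    have : a w0 ∈ Set.Icc (a u) (b u) ∩ Set.Icc (a w0) (b w0) :=
      ⟨⟨(hmono (hright w0 hw0)).le, h⟩, ⟨le_refl _, hab w0⟩⟩
    simp [hdisj] at this
  -- u has at least one neighbor in U
  have hpos : 0 < {w | w ∈ U ∧ (interGraph n a b).Adj u w}.ncard :=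
    lt_of_lt_of_le hk (hdom u hu)
  obtain ⟨w, hwU, -, x, hx1, hx2⟩ := Set.nonempty_of_ncard_ne_zero hpos.ne'
  have : a w0 ≤ a w := by
    rcases eq_or_lt_of_le (hw0min w hwU) with h | h
    · exact h ▸ le_refl _
    · exact (hmono h).le
  exact absurd (hx2.1.trans hx1.2) (not_le.mpr (lt_of_lt_of_le hbu this))
end
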